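/- (Off-by-one hard IQC) Let f ∈ S(m,L) with reference point u_⋆ = ∇f(y_⋆). For any sequence y_0, y_1, ... in ℝ^d, writing ỹ_k = y_k - y_⋆ and ũ_k = ∇f(y_k) - u_⋆, we have for every k ≥ 0: (ũ_0 - mỹ_0)ᵀ(Lỹ_0 - ũ_0) + Σ_{t=1}^{k} (ũ_t - mỹ_t)ᵀ(L(ỹ_t - ỹ_{t-1}) - (ũ_t - ũ_{t-1})) ≥ 0. -/

import Mathlib

open RealInnerProductSpace Finset

variable {E : Type*} [NormedAddCommGroup E] [InnerProductSpace ℝ E] [CompleteSpace E]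

lemma iqc_line_deriv (F : E → ℝ) (q : E → E) (hF : ∀ z, HasGradientAt F (q z) z)
    (x y : E) (t : ℝ) :
    HasDerivAt (fun s : ℝ => F (y + s • (x - y))) ⟪q (y + t • (x - y)), x - y⟫ t := by
  have hl : HasDerivAt (fun s : ℝ => y + s • (x - y)) (x - y) t := by
    simpa using ((hasDerivAt_id t).smul_const (x - y)).const_add y
  have hf := (hasGradientAt_iff_hasFDerivAt.mp (hF (y + t • (x - y)))).comp_hasDerivAt t hl
  simp at hf
  exact hf

lemma iqc_lower (F : E → ℝ) (q : E → E) (hF : ∀ z, HasGradientAt F (q z) z)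
    (hmono : ∀ x y : E, 0 ≤ ⟪q x - q y, x - y⟫) (x y : E) :
    F y + ⟪q y, x - y⟫ ≤ F x := by
  set ψ : ℝ → ℝ := fun t => F (y + t • (x - y)) - t * ⟪q y, x - y⟫ with hψdef
  have hψ : ∀ t : ℝ, HasDerivAt ψ (⟪q (y + t • (x - y)), x - y⟫ - ⟪q y, x - y⟫) t :=
    fun t => (iqc_line_deriv F q hF x y t).sub (hasDerivAt_mul_const _)
  have hmon : MonotoneOn ψ (Set.Icc (0:ℝ) 1) := by
    apply monotoneOn_of_deriv_nonneg (convex_Icc 0 1)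
      (HasDerivAt.continuousOn (fun t _ => hψ t))
    · exact fun t ht => (hψ t).differentiableAt.differentiableWithinAt
    · intro t ht
      rw [interior_Icc] at ht
      rw [(hψ t).deriv]
      have h0 := hmono (y + t • (x - y)) y
      have he : (y + t • (x - y)) - y = t • (x - y) := by abel
      rw [he, real_inner_smul_right] at h0
      rw [inner_sub_left] at h0
      nlinarith [h0, ht.1]
  have h01 := hmon (Set.mem_Icc.mpr ⟨le_refl 0, zero_le_one⟩)
    (Set.mem_Icc.mpr ⟨zero_le_one, le_refl 1⟩) zero_le_one
  simp only [hψdef, zero_smul, add_zero, one_smul, zero_mul, sub_zero, one_mul] at h01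
  have : y + (x - y) = x := by abel
  rw [this] at h01
  linarith

lemma iqc_upper (F : E → ℝ) (q : E → E) (M : ℝ) (hF : ∀ z, HasGradientAt F (q z) z)
    (hlip : ∀ x y : E, ⟪q x - q y, x - y⟫ ≤ M * ‖x - y‖ ^ 2) (x y : E) :
    F x ≤ F y + ⟪q y, x - y⟫ + (M / 2) * ‖x - y‖ ^ 2 := by
  set χ : ℝ → ℝ := fun t => F (y + t • (x - y)) - t * ⟪q y, x - y⟫
      - (M / 2) * t ^ 2 * ‖x - y‖ ^ 2 with hχdef
  have hχ : ∀ t : ℝ, HasDerivAt χ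
      (⟪q (y + t • (x - y)), x - y⟫ - ⟪q y, x - y⟫ - M * t * ‖x - y‖ ^ 2) t := by
    intro t
    have h2 : HasDerivAt (fun t : ℝ => (M / 2) * t ^ 2 * ‖x - y‖ ^ 2)
        (M * t * ‖x - y‖ ^ 2) t := by
      have := (((hasDerivAt_pow 2 t).const_mul (M / 2)).mul_const (‖x - y‖ ^ 2))
      refine this.congr_deriv ?_
      ring
    exact ((iqc_line_deriv F q hF x y t).sub (hasDerivAt_mul_const _)).sub h2
  have hant : AntitoneOn χ (Set.Icc (0:ℝ) 1) := by
    apply antitoneOn_of_deriv_nonpos (convex_Icc 0 1)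
      (HasDerivAt.continuousOn (fun t _ => hχ t))
    · exact fun t ht => (hχ t).differentiableAt.differentiableWithinAt
    · intro t ht
      rw [interior_Icc] at ht
      rw [(hχ t).deriv]
      have h0 := hlip (y + t • (x - y)) y
      have he : (y + t • (x - y)) - y = t • (x - y) := by abel
      rw [he, real_inner_smul_right, inner_sub_left, norm_smul] at h0
      simp only [Real.norm_eq_abs] at h0
      rw [abs_of_pos ht.1] at h0
      nlinarith [h0, ht.1]
  have h01 := hant (Set.mem_Icc.mpr ⟨le_refl 0, zero_le_one⟩)
    (Set.mem_Icc.mpr ⟨zero_le_one, le_refl 1⟩) zero_le_one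
  simp only [hχdef, zero_smul, add_zero, one_smul, zero_mul, sub_zero, one_mul, one_pow,
    mul_zero, zero_pow] at h01
  have : y + (x - y) = x := by abel
  rw [this] at h01
  linarith

lemma iqc_coco (F : E → ℝ) (q : E → E) (M : ℝ) (hM : 0 < M)
    (hF : ∀ z, HasGradientAt F (q z) z)
    (hmono : ∀ x y : E, 0 ≤ ⟪q x - q y, x - y⟫)
    (hlip : ∀ x y : E, ⟪q x - q y, x - y⟫ ≤ M * ‖x - y‖ ^ 2) (x y : E) :
    F x + ⟪q x, y - x⟫ + (1 / (2 * M)) * ‖q y - q x‖ ^ 2 ≤ F y := by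
  set G : E → ℝ := fun w => F w - ⟪q x, w⟫ with hGdef
  set p : E → E := fun w => q w - q x with hpdef
  have hG : ∀ z, HasGradientAt G (p z) z := by
    intro z
    have h1 := hasGradientAt_iff_hasFDerivAt.mp (hF z)
    have h2 := (h1.sub (innerSL ℝ (q x)).hasFDerivAt)
    rw [hasGradientAt_iff_hasFDerivAt]
    refine h2.congr_fderiv ?_
    ext w
    simp [hpdef, inner_sub_left]
  have hpd : ∀ a b : E, p a - p b = q a - q b := by
    intro a b; simp [hpdef]
  have hmono' : ∀ a b : E, 0 ≤ ⟪p a - p b, a - b⟫ := by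
    intro a b; rw [hpd]; exact hmono a b
  have hlip' : ∀ a b : E, ⟪p a - p b, a - b⟫ ≤ M * ‖a - b‖ ^ 2 := by
    intro a b; rw [hpd]; exact hlip a b
  set w : E := y - (1 / M) • (q y - q x) with hwdef
  have hlow := iqc_lower G p hG hmono' w x
  have hpx : p x = 0 := by simp [hpdef]
  rw [hpx, inner_zero_left] at hlow
  have hup := iqc_upper G p M hG hlip' w y
  have hwy : w - y = -((1 / M) • (q y - q x)) := by rw [hwdef]; abel
  have hin : ⟪p y, w - y⟫ = -(1 / M) * ‖q y - q x‖ ^ 2 := by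
    rw [hwy, inner_neg_right, real_inner_smul_right, hpdef]
    rw [real_inner_self_eq_norm_sq]
    ring
  have hnw : ‖w - y‖ ^ 2 = (1 / M) ^ 2 * ‖q y - q x‖ ^ 2 := by
    rw [hwy, norm_neg, norm_smul, mul_pow]
    simp [abs_of_pos (by positivity : (0:ℝ) < 1 / M)]
  rw [hin, hnw] at hup
  have key : G x ≤ G y - (1 / (2 * M)) * ‖q y - q x‖ ^ 2 := by
    calc G x ≤ G w := by linarith
    _ ≤ G y - (1 / (2 * M)) * ‖q y - q x‖ ^ 2 := by
        have : G y + -(1 / M) * ‖q y - q x‖ ^ 2 + M / 2 * ((1 / M) ^ 2 * ‖q y - q x‖ ^ 2)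
            = G y - (1 / (2 * M)) * ‖q y - q x‖ ^ 2 := by
          field_simp
          ring
        linarith [hup, this.symm.le]
  simp only [hGdef] at key
  have : ⟪q x, y⟫ - ⟪q x, x⟫ = ⟪q x, y - x⟫ := (inner_sub_right _ _ _).symm
  linarith [key, this]

/-- The off-by-one hard IQC satisfied by gradients of functions in `S(m,L)`. -/
theorem off_by_one_hard_iqc {d : ℕ} (m L : ℝ) (hm : 0 < m) (hmL : m < L)
    (f : EuclideanSpace ℝ (Fin d) → ℝ)
    (gf : EuclideanSpace ℝ (Fin d) → EuclideanSpace ℝ (Fin d))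
    (hgrad : ∀ x, HasGradientAt f (gf x) x)
    (hlow : ∀ x y, m * ‖x - y‖ ^ 2 ≤ ⟪gf x - gf y, x - y⟫)
    (hup : ∀ x y, ⟪gf x - gf y, x - y⟫ ≤ L * ‖x - y‖ ^ 2)
    (ystar : EuclideanSpace ℝ (Fin d))
    (y : ℕ → EuclideanSpace ℝ (Fin d)) :
    ∀ k : ℕ,
      0 ≤ ⟪gf (y 0) - gf ystar - m • (y 0 - ystar),
            L • (y 0 - ystar) - (gf (y 0) - gf ystar)⟫ +
          ∑ t ∈ Icc 1 k,
            ⟪gf (y t) - gf ystar - m • (y t - ystar),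
              L • ((y t - ystar) - (y (t - 1) - ystar))
                - ((gf (y t) - gf ystar) - (gf (y (t - 1)) - gf ystar))⟫ := by
  set c : EuclideanSpace ℝ (Fin d) := gf ystar - m • ystar with hc
  set F : EuclideanSpace ℝ (Fin d) → ℝ :=
    fun z => f z - (m / 2) * ‖z‖ ^ 2 - ⟪c, z⟫ with hFdef
  set q : EuclideanSpace ℝ (Fin d) → EuclideanSpace ℝ (Fin d) :=
    fun z => gf z - gf ystar - m • (z - ystar) with hqdef
  set M : ℝ := L - m with hM
  have hMpos : 0 < M := by simp only [hM]; linarith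
  -- the gradient of F is q
  have hqg : ∀ z, HasGradientAt F (q z) z := by
    intro z
    rw [hasGradientAt_iff_hasFDerivAt]
    have h1 := hasGradientAt_iff_hasFDerivAt.mp (hgrad z)
    have h2 : HasFDerivAt (fun w : EuclideanSpace ℝ (Fin d) => (m / 2) * ‖w‖ ^ 2)
        ((m / 2) • (2 • (innerSL ℝ z))) z :=
      (hasStrictFDerivAt_norm_sq z).hasFDerivAt.const_smul (m / 2)
    have h3 := (h1.sub h2).sub (innerSL ℝ c).hasFDerivAt
    refine h3.congr_fderiv ?_
    ext w
    simp [hqdef, hc, inner_sub_left, real_inner_smul_left, inner_smul_left, two_smul,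
      inner_add_left]
    ring_nf
  -- difference formula for q
  have hqd : ∀ a b : EuclideanSpace ℝ (Fin d), q a - q b = (gf a - gf b) - m • (a - b) := by
    intro a b
    simp only [hqdef, smul_sub]
    abel
  have hmono : ∀ a b : EuclideanSpace ℝ (Fin d), 0 ≤ ⟪q a - q b, a - b⟫ := by
    intro a b
    rw [hqd, inner_sub_left, real_inner_smul_left, real_inner_self_eq_norm_sq]
    linarith [hlow a b]
  have hlip : ∀ a b : EuclideanSpace ℝ (Fin d), ⟪q a - q b, a - b⟫ ≤ M * ‖a - b‖ ^ 2 := by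
    intro a b
    rw [hqd, inner_sub_left, real_inner_smul_left, real_inner_self_eq_norm_sq]
    have := hup a b
    simp only [hM]
    linarith
  have coco := iqc_coco F q M hMpos hqg hmono hlip
  -- multiplied-through version, linear in the atoms
  have coco' : ∀ a b : EuclideanSpace ℝ (Fin d),
      M * F a + M * ⟪q a, b - a⟫ + (1 / 2) * ‖q b - q a‖ ^ 2 ≤ M * F b := by
    intro a b
    have h := mul_le_mul_of_nonneg_left (coco a b) hMpos.le
    have e : M * (F a + ⟪q a, b - a⟫ + (1 / (2 * M)) * ‖q b - q a‖ ^ 2)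
        = M * F a + M * ⟪q a, b - a⟫ + (1 / 2) * ‖q b - q a‖ ^ 2 := by
      field_simp
    linarith [h, e.symm.le, e.le]
  have hqstar : q ystar = 0 := by simp [hqdef]
  -- Lyapunov function
  set W : EuclideanSpace ℝ (Fin d) → ℝ :=
    fun z => M * (F z - F ystar) - (1 / 2) * ‖q z‖ ^ 2 with hWdef
  have hWexp : ∀ z, W z = M * F z - M * F ystar - (1 / 2) * ‖q z‖ ^ 2 := by
    intro z; simp only [hWdef]; ring
  have hWnonneg : ∀ z, 0 ≤ W z := by
    intro z
    have h := coco' ystar z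
    rw [hqstar, inner_zero_left, sub_zero] at h
    rw [hWexp]
    linarith
  -- base inequality
  have hbase : W (y 0) ≤ ⟪q (y 0), M • (y 0 - ystar) - q (y 0)⟫ := by
    have h := coco' (y 0) ystar
    have h1 : ⟪q (y 0), ystar - y 0⟫ = -⟪q (y 0), y 0 - ystar⟫ := by
      rw [show ystar - y 0 = -(y 0 - ystar) by abel, inner_neg_right]
    rw [h1, hqstar, zero_sub, norm_neg, mul_neg] at h
    rw [inner_sub_right, real_inner_smul_right, real_inner_self_eq_norm_sq, hWexp]
    linarith
  -- step inequality
  have hstep : ∀ a b : EuclideanSpace ℝ (Fin d),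
      W a - W b ≤ ⟪q a, M • (a - b) - (q a - q b)⟫ := by
    intro a b
    have h := coco' a b
    have h1 : ⟪q a, b - a⟫ = -⟪q a, a - b⟫ := by
      rw [show b - a = -(a - b) by abel, inner_neg_right]
    rw [h1, mul_neg] at h
    have hrev : ‖q b - q a‖ ^ 2 = ‖q a - q b‖ ^ 2 := by rw [norm_sub_rev]
    have hid : ⟪q a, q a - q b⟫
        = (1 / 2) * ‖q a‖ ^ 2 - (1 / 2) * ‖q b‖ ^ 2 + (1 / 2) * ‖q a - q b‖ ^ 2 := by
      have h2 := norm_sub_sq_real (q a) (q b)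
      rw [inner_sub_right, real_inner_self_eq_norm_sq]
      linarith
    rw [inner_sub_right, real_inner_smul_right, hid, hWexp, hWexp]
    linarith
  -- rewrite the terms of the statement
  have hterm0 : L • (y 0 - ystar) - (gf (y 0) - gf ystar)
      = M • (y 0 - ystar) - q (y 0) := by
    simp only [hqdef, hM, sub_smul, smul_sub]
    abel
  have htermt : ∀ t : ℕ, L • ((y (t + 1) - ystar) - (y t - ystar))
        - ((gf (y (t + 1)) - gf ystar) - (gf (y t) - gf ystar))
      = M • (y (t + 1) - y t) - (q (y (t + 1)) - q (y t)) := by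
    intro t
    simp only [hqdef, hM, sub_smul, smul_sub]
    abel
  -- the sum dominates W ∘ y
  have main : ∀ k : ℕ, W (y k) ≤
      ⟪gf (y 0) - gf ystar - m • (y 0 - ystar),
            L • (y 0 - ystar) - (gf (y 0) - gf ystar)⟫ +
          ∑ t ∈ Icc 1 k,
            ⟪gf (y t) - gf ystar - m • (y t - ystar),
              L • ((y t - ystar) - (y (t - 1) - ystar))
                - ((gf (y t) - gf ystar) - (gf (y (t - 1)) - gf ystar))⟫ := by
    intro k
    induction k with
    | zero =>
      rw [Finset.Icc_eq_empty (by omega : ¬(1:ℕ) ≤ 0), Finset.sum_empty, add_zero, hterm0]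
      exact hbase
    | succ n ih =>
      rw [Finset.sum_Icc_succ_top (by omega : 1 ≤ n + 1)]
      simp only [Nat.add_sub_cancel]
      rw [htermt n,
        show gf (y (n + 1)) - gf ystar - m • (y (n + 1) - ystar) = q (y (n + 1)) from rfl,
        ← add_assoc]
      linarith [ih, hstep (y (n + 1)) (y n)]
  intro k
  linarith [hWnonneg (y k), main k]
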